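/- Let X be a uniform space. The sets of the form ⋃_{A ∈ γ} (V[A] × V[A]), where γ ranges over finite covers of X and V over entourages of X, form a basis of entourages for the totally bounded replica of the uniformity of X (the coarsest uniformity making all bounded uniformly continuous real-valued functions on X uniformly continuous). -/

import Mathlib

/-- The V-neighbourhood V[A] of a set A in a uniform space. -/
def uNbhd {X : Type*} (V : Set (X × X)) (A : Set X) : Set X :=
  {x | ∃ a ∈ A, (x, a) ∈ V}

/-- The totally bounded replica of the uniformity of X: the filter on X × X
generated by the entourages {(x,y) : dist(f(x),f(y)) < ε} where f ranges over
bounded uniformly continuous maps into finite-dimensional Euclidean spaces. -/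
def tbReplica (X : Type*) [UniformSpace X] : Filter (X × X) :=
  Filter.generate {S : Set (X × X) |
    ∃ (N : ℕ) (f : X → EuclideanSpace ℝ (Fin N)) (ε : ℝ), 0 < ε ∧
      UniformContinuous f ∧ Bornology.IsBounded (Set.range f) ∧
      S = {p : X × X | dist (f p.1) (f p.2) < ε}}

open Set Filter Uniformity

lemma exists_pm {X : Type*} [u : UniformSpace X] {V : Set (X × X)} (hV : V ∈ 𝓤 X) :
    ∃ (I : PseudoMetricSpace X) (ε : ℝ), 0 < ε ∧
      𝓤 X ≤ @uniformity X I.toUniformSpace ∧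
      ∀ x y : X, @dist X I.toDist x y < ε → (x, y) ∈ V := by
  classical
  have H : ∀ s : Set (X × X), s ∈ 𝓤 X → ∃ t, t ∈ 𝓤 X ∧ SetRel.IsSymm t ∧ SetRel.comp t t ⊆ s := by
    intro s hs
    obtain ⟨t, ht, hsymm, hsub⟩ := comp_symm_mem_uniformity_sets hs
    exact ⟨t, ht, hsymm, hsub⟩
  choose! T hT1 hT2 hT3 using H
  set W : ℕ → Set (X × X) := fun n => T^[n + 1] V with hW
  have hWsucc : ∀ n, W (n + 1) = T (W n) := by
    intro n
    simp [hW, Function.iterate_succ_apply']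
  have hW0 : W 0 = T V := by simp [hW]
  have hWmem : ∀ n, W n ∈ 𝓤 X := by
    intro n
    induction n with
    | zero => rw [hW0]; exact hT1 V hV
    | succ n ih => rw [hWsucc]; exact hT1 _ ih
  have hWsymm : ∀ n, SetRel.IsSymm (W n) := by
    intro n
    cases n with
    | zero => rw [hW0]; exact hT2 V hV
    | succ n => rw [hWsucc]; exact hT2 _ (hWmem n)
  have hWcomp : ∀ n, SetRel.comp (W (n + 1)) (W (n + 1)) ⊆ W n := by
    intro n; rw [hWsucc]; exact hT3 _ (hWmem n)
  have hWV : SetRel.comp (W 0) (W 0) ⊆ V := by rw [hW0]; exact hT3 V hV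
  have hWmono : ∀ n, W (n + 1) ⊆ W n := by
    intro n p hp
    exact hWcomp n ⟨p.1, refl_mem_uniformity (hWmem (n + 1)), hp⟩
  have hanti : Antitone W := antitone_nat_of_succ_le hWmono
  have hFbasis : (⨅ n, 𝓟 (W n) : Filter (X × X)).HasBasis (fun _ : ℕ => True) W :=
    Filter.hasBasis_iInf_principal (hanti.directed_ge)
  have hmemF : ∀ n, W n ∈ (⨅ n, 𝓟 (W n) : Filter (X × X)) := fun n => hFbasis.mem_of_mem trivial
  set core : UniformSpace.Core X := UniformSpace.Core.mk' (⨅ n, 𝓟 (W n))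
    (by
      intro r hr x
      obtain ⟨n, -, hn⟩ := hFbasis.mem_iff.1 hr
      exact hn (refl_mem_uniformity (hWmem n)))
    (by
      intro r hr
      obtain ⟨n, -, hn⟩ := hFbasis.mem_iff.1 hr
      exact mem_of_superset (hmemF n) fun p hp => hn ((hWsymm n).symm _ _ hp))
    (by
      intro r hr
      obtain ⟨n, -, hn⟩ := hFbasis.mem_iff.1 hr
      exact ⟨W (n + 1), hmemF (n + 1), (hWcomp n).trans hn⟩) with hcore
  have hcg : @Filter.IsCountablyGenerated _ (@uniformity X (UniformSpace.ofCore core)) :=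
    Filter.isCountablyGenerated_seq W
  obtain ⟨I, hI⟩ := @UniformSpace.metrizable_uniformity X (UniformSpace.ofCore core) hcg
  have huni : @uniformity X I.toUniformSpace = ⨅ n, 𝓟 (W n) := by rw [hI]; rfl
  have hle : @uniformity X u ≤ @uniformity X I.toUniformSpace := by
    rw [huni]
    exact le_iInf fun n => le_principal_iff.2 (hWmem n)
  have hVF : V ∈ @uniformity X I.toUniformSpace := by
    rw [huni]
    exact mem_of_superset (hmemF 0) fun p hp => hWV ⟨p.1, refl_mem_uniformity (hWmem 0), hp⟩
  obtain ⟨ε, hε, hball⟩ := (@Metric.mem_uniformity_dist X I V).1 hVF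
  exact ⟨I, ε, hε, hle, fun x y h => hball h⟩

lemma basisSet_mem {X : Type*} [u : UniformSpace X] (γ : Finset (Set X)) {V : Set (X × X)}
    (hγ : ⋃₀ (↑γ : Set (Set X)) = Set.univ) (hV : V ∈ 𝓤 X) :
    ∃ (N : ℕ) (f : X → EuclideanSpace ℝ (Fin N)) (ε : ℝ), 0 < ε ∧
      UniformContinuous f ∧ Bornology.IsBounded (Set.range f) ∧
      {p : X × X | dist (f p.1) (f p.2) < ε} ⊆ ⋃ A ∈ γ, (uNbhd V A) ×ˢ (uNbhd V A) := by
  classical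
  obtain ⟨I, ε₀, hε₀, hle, hsmall⟩ := exists_pm hV
  set D : X → X → ℝ := fun x y => @dist X I.toDist x y with hD
  have hDnn : ∀ x y, 0 ≤ D x y := fun x y => @dist_nonneg X I x y
  set N := γ.card with hN
  set g : {A // A ∈ γ} → X → ℝ := fun A x => min ε₀ (@Metric.infDist X I x A.1) with hg
  have hg0 : ∀ A x, 0 ≤ g A x := by
    intro A x
    exact le_min hε₀.le (@Metric.infDist_nonneg X I _ _)
  have hgε : ∀ A x, g A x ≤ ε₀ := fun A x => min_le_left _ _
  have keymin : ∀ a b : ℝ, min ε₀ a - min ε₀ b ≤ |a - b| := by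
    intro a b
    have h1 : min ε₀ a ≤ min (ε₀ + |a - b|) (b + |a - b|) :=
      min_le_min (by linarith [abs_nonneg (a - b)]) (by linarith [le_abs_self (a - b)])
    rw [min_add_add_right] at h1
    linarith
  have habs : ∀ A x y, |g A x - g A y| ≤ D x y := by
    intro A x y
    have h1 : @Metric.infDist X I x A.1 ≤ @Metric.infDist X I y A.1 + D x y :=
      @Metric.infDist_le_infDist_add_dist X I _ _ _
    have h2 : @Metric.infDist X I y A.1 ≤ @Metric.infDist X I x A.1 + D y x :=
      @Metric.infDist_le_infDist_add_dist X I _ _ _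
    have hsymm : D y x = D x y := @dist_comm X I _ _
    rw [abs_sub_le_iff]
    constructor
    · refine (keymin _ _).trans ?_
      rw [abs_le]
      exact ⟨by linarith [hDnn x y], by linarith⟩
    · refine (keymin _ _).trans ?_
      rw [abs_le]
      rw [hsymm] at h2
      exact ⟨by linarith [hDnn x y], by linarith⟩
  set f : X → EuclideanSpace ℝ (Fin N) :=
    fun x => (WithLp.equiv 2 (Fin N → ℝ)).symm (fun i => g (γ.equivFin.symm i) x) with hf
  have hfapp : ∀ x i, f x i = g (γ.equivFin.symm i) x := by
    intro x i
    simp [hf]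
  have hsum : ∀ (x y : X) (C : ℝ), 0 ≤ C → (∀ i, dist (f x i) (f y i) ≤ C) →
      dist (f x) (f y) ≤ Real.sqrt N * C := by
    intro x y C hC h
    rw [EuclideanSpace.dist_eq]
    have hb : (∑ i, dist (f x i) (f y i) ^ 2) ≤ (N : ℝ) * C ^ 2 := by
      calc (∑ i, dist (f x i) (f y i) ^ 2) ≤ ∑ _i : Fin N, C ^ 2 :=
            Finset.sum_le_sum fun i _ => pow_le_pow_left₀ dist_nonneg (h i) 2
        _ = (N : ℝ) * C ^ 2 := by simp [mul_comm]
    calc Real.sqrt (∑ i, dist (f x i) (f y i) ^ 2) ≤ Real.sqrt ((N : ℝ) * C ^ 2) :=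
          Real.sqrt_le_sqrt hb
      _ = Real.sqrt N * C := by
          rw [Real.sqrt_mul (Nat.cast_nonneg N), Real.sqrt_sq hC]
  have hsingle : ∀ (x y : X) (i : Fin N), dist (f x i) (f y i) ≤ dist (f x) (f y) := by
    intro x y i
    rw [EuclideanSpace.dist_eq]
    calc dist (f x i) (f y i) = Real.sqrt (dist (f x i) (f y i) ^ 2) :=
          (Real.sqrt_sq dist_nonneg).symm
      _ ≤ Real.sqrt (∑ j, dist (f x j) (f y j) ^ 2) :=
          Real.sqrt_le_sqrt (Finset.single_le_sum
            (f := fun j => dist (f x j) (f y j) ^ 2)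
            (fun j _ => sq_nonneg _) (Finset.mem_univ i))
  have hcoordD : ∀ x y i, dist (f x i) (f y i) ≤ D x y := by
    intro x y i
    rw [hfapp, hfapp, Real.dist_eq]
    exact habs _ x y
  have hUC : UniformContinuous f := by
    rw [uniformContinuous_def]
    intro r hr
    obtain ⟨δ, hδ, hball⟩ := Metric.mem_uniformity_dist.1 hr
    have hδ' : 0 < δ / (Real.sqrt N + 1) := by positivity
    have hmem : {p : X × X | D p.1 p.2 < δ / (Real.sqrt N + 1)} ∈ 𝓤 X :=
      hle (@Metric.dist_mem_uniformity X I _ hδ')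
    refine Filter.mem_of_superset hmem fun p hp => ?_
    refine hball ?_
    have h1 : dist (f p.1) (f p.2) ≤ Real.sqrt N * D p.1 p.2 :=
      hsum _ _ _ (hDnn _ _) (fun i => hcoordD _ _ i)
    have h2 : Real.sqrt N * D p.1 p.2 < δ := by
      have hs : (0:ℝ) ≤ Real.sqrt N := Real.sqrt_nonneg _
      have hlt : D p.1 p.2 < δ / (Real.sqrt N + 1) := hp
      have hq : Real.sqrt N * D p.1 p.2 ≤ Real.sqrt N * (δ / (Real.sqrt N + 1)) :=
        mul_le_mul_of_nonneg_left hlt.le hs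
      have hpos : (0:ℝ) < Real.sqrt N + 1 := by linarith
      have hfin : Real.sqrt N * (δ / (Real.sqrt N + 1)) < δ := by
        rw [mul_div_assoc', div_lt_iff₀ hpos]
        nlinarith
      linarith
    exact lt_of_le_of_lt h1 h2
  have hbdd : Bornology.IsBounded (Set.range f) := by
    rw [Metric.isBounded_range_iff]
    refine ⟨Real.sqrt N * ε₀, fun x y => hsum x y ε₀ hε₀.le fun i => ?_⟩
    rw [hfapp, hfapp, Real.dist_eq, abs_sub_le_iff]
    constructor
    · linarith [hg0 (γ.equivFin.symm i) y, hgε (γ.equivFin.symm i) x]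
    · linarith [hg0 (γ.equivFin.symm i) x, hgε (γ.equivFin.symm i) y]
  refine ⟨N, f, ε₀ / 2, by positivity, hUC, hbdd, ?_⟩
  rintro ⟨x, y⟩ hxy
  simp only [Set.mem_setOf_eq] at hxy
  have hxuniv : x ∈ ⋃₀ (↑γ : Set (Set X)) := hγ.symm ▸ Set.mem_univ x
  obtain ⟨A, hA, hxA⟩ := hxuniv
  set i : Fin N := γ.equivFin ⟨A, hA⟩ with hi
  have hfx : f x i = 0 := by
    rw [hfapp, hi, Equiv.symm_apply_apply, hg]
    simp [@Metric.infDist_zero_of_mem X I _ _ hxA, min_eq_right hε₀.le]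
  have hfy : f y i = g ⟨A, hA⟩ y := by rw [hfapp, hi, Equiv.symm_apply_apply]
  have hgy : g ⟨A, hA⟩ y < ε₀ / 2 := by
    have h1 := hsingle x y i
    rw [hfx, hfy, Real.dist_eq] at h1
    have := abs_nonneg (0 - g ⟨A, hA⟩ y)
    have h2 : |0 - g ⟨A, hA⟩ y| = g ⟨A, hA⟩ y := by
      rw [zero_sub, abs_neg, abs_of_nonneg (hg0 _ _)]
    rw [h2] at h1
    linarith
  have hinf : @Metric.infDist X I y A < ε₀ := by
    by_contra hcon
    push_neg at hcon
    have : ε₀ / 2 ≤ g ⟨A, hA⟩ y := le_min (by linarith) (by linarith)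
    linarith
  obtain ⟨a, haA, hya⟩ := (@Metric.infDist_lt_iff X I _ _ _ ⟨x, hxA⟩).1 hinf
  refine Set.mem_iUnion₂.2 ⟨A, hA, ?_⟩
  refine Set.mk_mem_prod ⟨x, hxA, refl_mem_uniformity hV⟩ ⟨a, haA, hsmall y a hya⟩

lemma gen_superset {X : Type*} [UniformSpace X] {N : ℕ} {f : X → EuclideanSpace ℝ (Fin N)}
    {ε : ℝ} (hε : 0 < ε) (hf : UniformContinuous f)
    (hb : Bornology.IsBounded (Set.range f)) :
    ∃ (γ : Finset (Set X)) (V : Set (X × X)), (⋃₀ (↑γ : Set (Set X)) = Set.univ) ∧ V ∈ 𝓤 X ∧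
      (⋃ A ∈ γ, (uNbhd V A) ×ˢ (uNbhd V A)) ⊆ {p : X × X | dist (f p.1) (f p.2) < ε} := by
  classical
  have htb : TotallyBounded (Set.range f) :=
    (hb.isCompact_closure.totallyBounded).subset subset_closure
  obtain ⟨t, htf, hcov⟩ := Metric.totallyBounded_iff.1 htb (ε / 4) (by positivity)
  set γ : Finset (Set X) :=
    Finset.image (fun c => f ⁻¹' Metric.ball c (ε / 4)) htf.toFinset with hγdef
  have hγ : ⋃₀ (↑γ : Set (Set X)) = Set.univ := by
    apply Set.eq_univ_of_forall
    intro x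
    have : f x ∈ ⋃ y ∈ t, Metric.ball y (ε / 4) := hcov (Set.mem_range_self x)
    obtain ⟨c, hc, hball⟩ := Set.mem_iUnion₂.1 this
    refine ⟨f ⁻¹' Metric.ball c (ε / 4), ?_, hball⟩
    simp only [Finset.coe_image, Set.mem_image, Finset.mem_coe, Set.Finite.mem_toFinset, hγdef]
    exact ⟨c, hc, rfl⟩
  set V : Set (X × X) := (fun p : X × X => (f p.1, f p.2)) ⁻¹' {q | dist q.1 q.2 < ε / 4}
    with hVdef
  have hV : V ∈ 𝓤 X := hf (Metric.dist_mem_uniformity (by positivity))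
  refine ⟨γ, V, hγ, hV, ?_⟩
  rintro ⟨x, y⟩ hxy
  obtain ⟨A, hA, hxyA⟩ := Set.mem_iUnion₂.1 hxy
  have hA' : ∃ c ∈ t, f ⁻¹' Metric.ball c (ε / 4) = A := by
    simpa [hγdef, Set.Finite.mem_toFinset] using Finset.mem_image.1 hA
  obtain ⟨c, -, rfl⟩ := hA'
  obtain ⟨hx, hy⟩ := hxyA
  obtain ⟨a, haA, hxa⟩ := hx
  obtain ⟨b, hbA, hyb⟩ := hy
  have hfa : dist (f a) c < ε / 4 := haA
  have hfb : dist (f b) c < ε / 4 := hbA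
  have hxa' : dist (f x) (f a) < ε / 4 := hxa
  have hyb' : dist (f y) (f b) < ε / 4 := hyb
  have h1 : dist (f x) c < ε / 2 := by
    calc dist (f x) c ≤ dist (f x) (f a) + dist (f a) c := dist_triangle _ _ _
      _ < ε / 2 := by linarith
  have h2 : dist (f y) c < ε / 2 := by
    calc dist (f y) c ≤ dist (f y) (f b) + dist (f b) c := dist_triangle _ _ _
      _ < ε / 2 := by linarith
  show dist (f x) (f y) < ε
  calc dist (f x) (f y) ≤ dist (f x) c + dist c (f y) := dist_triangle _ _ _
    _ < ε := by rw [dist_comm c (f y)]; linarith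

lemma uNbhd_mono {X : Type*} {V V' : Set (X × X)} {A A' : Set X}
    (hV : V ⊆ V') (hA : A ⊆ A') : uNbhd V A ⊆ uNbhd V' A' :=
  fun _x ⟨a, haA, hxa⟩ => ⟨a, hA haA, hV hxa⟩

lemma aux_inter {X : Type*} [UniformSpace X] (s : Set (Set (X × X))) (hfin : s.Finite) :
    s ⊆ {S : Set (X × X) |
      ∃ (N : ℕ) (f : X → EuclideanSpace ℝ (Fin N)) (ε : ℝ), 0 < ε ∧
        UniformContinuous f ∧ Bornology.IsBounded (Set.range f) ∧
        S = {p : X × X | dist (f p.1) (f p.2) < ε}} →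
    ∃ (γ : Finset (Set X)) (V : Set (X × X)), (⋃₀ (↑γ : Set (Set X)) = Set.univ) ∧ V ∈ 𝓤 X ∧
      (⋃ A ∈ γ, (uNbhd V A) ×ˢ (uNbhd V A)) ⊆ ⋂₀ s := by
  classical
  refine Set.Finite.induction_on s hfin ?_ ?_
  · intro _
    exact ⟨{Set.univ}, Set.univ, by simp, Filter.univ_mem, by simp⟩
  · rintro a s ha hfs ih hsub
    obtain ⟨γs, Vs, hcovs, hVs, hsubs⟩ := ih fun x hx => hsub (Set.mem_insert_of_mem _ hx)
    obtain ⟨N, f, ε, hε, hf, hb, hEq⟩ := hsub (Set.mem_insert _ _)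
    obtain ⟨γa, Va, hcova, hVa, hsuba⟩ := gen_superset hε hf hb
    rw [← hEq] at hsuba
    refine ⟨Finset.image (fun q : Set X × Set X => q.1 ∩ q.2) (γa ×ˢ γs), Va ∩ Vs, ?_,
      Filter.inter_mem hVa hVs, ?_⟩
    · apply Set.eq_univ_of_forall
      intro x
      obtain ⟨A₁, hA₁, hx₁⟩ := (hcova.symm ▸ Set.mem_univ x : x ∈ ⋃₀ (↑γa : Set (Set X)))
      obtain ⟨A₂, hA₂, hx₂⟩ := (hcovs.symm ▸ Set.mem_univ x : x ∈ ⋃₀ (↑γs : Set (Set X)))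
      refine ⟨A₁ ∩ A₂, ?_, hx₁, hx₂⟩
      simp only [Finset.coe_image, Set.mem_image, Finset.mem_coe, Finset.mem_product]
      exact ⟨(A₁, A₂), ⟨hA₁, hA₂⟩, rfl⟩
    · rw [Set.sInter_insert]
      intro p hp
      obtain ⟨A, hA, hpA⟩ := Set.mem_iUnion₂.1 hp
      obtain ⟨⟨A₁, A₂⟩, hq, rfl⟩ := Finset.mem_image.1 hA
      obtain ⟨h₁, h₂⟩ := Finset.mem_product.1 hq
      have hm1 : uNbhd (Va ∩ Vs) (A₁ ∩ A₂) ⊆ uNbhd Va A₁ :=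
        uNbhd_mono Set.inter_subset_left Set.inter_subset_left
      have hm2 : uNbhd (Va ∩ Vs) (A₁ ∩ A₂) ⊆ uNbhd Vs A₂ :=
        uNbhd_mono Set.inter_subset_right Set.inter_subset_right
      constructor
      · exact hsuba (Set.mem_iUnion₂.2 ⟨A₁, h₁, hm1 hpA.1, hm1 hpA.2⟩)
      · exact hsubs (Set.mem_iUnion₂.2 ⟨A₂, h₂, hm2 hpA.1, hm2 hpA.2⟩)


/-- the sets ⋃_{A ∈ γ} V[A] × V[A], for γ a finite cover of X and
V an entourage, form a basis of the totally bounded replica of the uniformity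
of X. -/
theorem tbReplica_basis (X : Type*) [UniformSpace X] :
    (tbReplica X).HasBasis
      (fun gv : Finset (Set X) × Set (X × X) =>
        (⋃₀ (↑gv.1 : Set (Set X)) = Set.univ) ∧ gv.2 ∈ uniformity X)
      (fun gv => ⋃ A ∈ gv.1, (uNbhd gv.2 A) ×ˢ (uNbhd gv.2 A)) := by
  constructor
  intro t
  rw [tbReplica, Filter.mem_generate_iff]
  constructor
  · rintro ⟨s, hsub, hfin, hst⟩
    obtain ⟨γ, V, hcov, hV, hsubset⟩ := aux_inter s hfin hsub
    exact ⟨(γ, V), ⟨hcov, hV⟩, hsubset.trans hst⟩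
  · rintro ⟨⟨γ, V⟩, ⟨hcov, hV⟩, hsub⟩
    obtain ⟨N, f, ε, hε, hf, hb, hS⟩ := basisSet_mem γ hcov hV
    refine ⟨{{p : X × X | dist (f p.1) (f p.2) < ε}}, ?_, Set.finite_singleton _, ?_⟩
    · intro S hS'
      rw [Set.mem_singleton_iff] at hS'
      subst hS'
      exact ⟨N, f, ε, hε, hf, hb, rfl⟩
    · rw [Set.sInter_singleton]
      exact hS.trans hsub
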